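/- (Maximal quantum violation by the graph state with explicit Pauli measurements) Let N ≥ 2 and let ψ_G = 2^{−N/2} Σ_{τ ∈ {0,1}^N} (−1)^{w(τ)(w(τ)−1)/2} |τ⟩ ∈ (ℂ²)^{⊗N} be the fully connected graph state. Define binary observables: Ā_0^{(1)} = (σ_x − σ_z)/√2, Ā_1^{(1)} = −(σ_x + σ_z)/√2, and Ā_0^{(i)} = σ_z, Ā_1^{(i)} = σ_x for i = 2,…,N. Then the Svetlichny–Bell operator Ŝ_N^+ = Σ_{x ∈ {0,1}^N} (−1)^{w(x)(w(x)+1)/2} Ā_{x_1}^{(1)} ⊗ … ⊗ Ā_{x_N}^{(N)} satisfies ⟨ψ_G, Ŝ_N^+ ψ_G⟩ = 2^{N−1}√2, i.e. these measurements on ψ_G maximally violate the N-partite Svetlichny inequality. -/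

import Mathlib

open Matrix

noncomputable section

/-- Hamming weight of a bit string. -/
def wt {n : ℕ} (x : Fin n → Fin 2) : ℕ := ∑ i, (x i : ℕ)

/-- The Svetlichny sign `(-1)^{w(x)(w(x)+1)/2}`. -/
def sgn {n : ℕ} (x : Fin n → Fin 2) : ℂ := (-1) ^ (wt x * (wt x + 1) / 2)

/-- The Pauli `σ_x` matrix. -/
def pauliX : Matrix (Fin 2) (Fin 2) ℂ := !![0, 1; 1, 0]

/-- The Pauli `σ_z` matrix. -/
def pauliZ : Matrix (Fin 2) (Fin 2) ℂ := !![1, 0; 0, -1]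

/-- The fully connected graph state on `N` qubits:
`ψ_G = 2^{-N/2} Σ_τ (-1)^{w(τ)(w(τ)-1)/2} |τ⟩`. -/
def psiG (N : ℕ) : (Fin N → Fin 2) → ℂ :=
  fun τ => (-1 : ℂ) ^ (wt τ * (wt τ - 1) / 2) / (Real.sqrt 2 : ℂ) ^ N

/-- The qubit observables maximally violating the Svetlichny inequality on `ψ_G`:
`Ā_0^{(1)} = (σ_x - σ_z)/√2`, `Ā_1^{(1)} = -(σ_x + σ_z)/√2` for the first party and
`Ā_0^{(i)} = σ_z`, `Ā_1^{(i)} = σ_x` for the other parties. -/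
def Aop (N : ℕ) (i : Fin N) (b : Fin 2) : Matrix (Fin 2) (Fin 2) ℂ :=
  if (i : ℕ) = 0 then
    (if b = 0 then ((Real.sqrt 2 : ℂ))⁻¹ • (pauliX - pauliZ)
      else (-((Real.sqrt 2 : ℂ))⁻¹) • (pauliX + pauliZ))
  else (if b = 0 then pauliZ else pauliX)

/-- The corresponding `N`-partite Svetlichny–Bell operator on `(ℂ²)^{⊗N}`. -/
def svetQubit (N : ℕ) : Matrix (Fin N → Fin 2) (Fin N → Fin 2) ℂ :=
  ∑ x : Fin N → Fin 2,
    sgn x • (Matrix.of fun p q => ∏ i, Aop N i (x i) (p i) (q i))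

open Finset


lemma two_mul_choose_two (w : ℕ) : 2 * w.choose 2 = w * (w - 1) := by
  rw [Nat.choose_two_right, Nat.mul_div_cancel']
  rcases w with _ | u
  · simp
  · simpa [Nat.mul_comm] using (Nat.even_mul_succ_self u).two_dvd

lemma int_two_mul_choose_two (w : ℕ) : (2:ℤ) * w.choose 2 = w * ((w:ℤ) - 1) := by
  rcases w with _ | u
  · simp
  · have h : (2:ℤ) * ((u+1).choose 2 : ℤ) = (u+1) * u := by
      exact_mod_cast (by simpa using two_mul_choose_two (u+1) : 2 * (u+1).choose 2 = (u+1) * u)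
    push_cast
    push_cast at h
    linarith

lemma wt_add {N : ℕ} (q v : Fin N → Fin 2) :
    wt (q + v) + 2 * (∑ i, (q i : ℕ) * (v i : ℕ)) = wt q + wt v := by
  have key : ∀ a b : Fin 2, ((a + b : Fin 2) : ℕ) + 2 * ((a:ℕ) * (b:ℕ)) = (a:ℕ) + b := by decide
  unfold wt
  rw [Finset.mul_sum, ← Finset.sum_add_distrib, ← Finset.sum_add_distrib]
  exact Finset.sum_congr rfl fun i _ => key (q i) (v i)

lemma choose_two_int (s a b t : ℕ) (h : s + 2*t = a + b) :
    (s.choose 2 : ℤ) = a.choose 2 + b.choose 2 + a*b - t + 2*(t*t + t - t*(a+b)) := by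
  have hsz : (s:ℤ) = a + b - 2*t := by omega
  have h2 : (2:ℤ) ≠ 0 := by norm_num
  apply mul_left_cancel₀ h2
  rw [int_two_mul_choose_two, hsz]
  have e1 := int_two_mul_choose_two a
  have e2 := int_two_mul_choose_two b
  linear_combination -e1 - e2

lemma neg_pow_congr (a b : ℕ) (h : (a : ZMod 2) = b) : (-1:ℂ)^a = (-1)^b := by
  rw [neg_one_pow_eq_pow_mod_two (R:=ℂ), neg_one_pow_eq_pow_mod_two (R:=ℂ) (n:=b)]
  congr 1
  exact (ZMod.natCast_eq_natCast_iff a b 2).mp h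

lemma sign_split {N : ℕ} (q v : Fin N → Fin 2) :
    (-1:ℂ)^((wt (q+v)).choose 2) * (-1)^((wt q).choose 2)
      = (-1)^((wt v).choose 2) * (-1)^(wt q * wt v + ∑ i, (q i : ℕ) * (v i : ℕ)) := by
  rw [← pow_add, ← pow_add]
  apply neg_pow_congr
  have hZ := choose_two_int (wt (q+v)) (wt q) (wt v) (∑ i, (q i : ℕ) * (v i : ℕ)) (wt_add q v)
  have hZ2 := congrArg (Int.cast : ℤ → ZMod 2) hZ
  have htwo : (2 : ZMod 2) = 0 := rfl
  push_cast at hZ2 ⊢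
  linear_combination hZ2 + (((wt q).choose 2 : ZMod 2)
      - (∑ i, ((q i : ℕ) : ZMod 2) * ((v i : ℕ) : ZMod 2))
      + ((∑ i, ((q i : ℕ) : ZMod 2) * ((v i : ℕ) : ZMod 2))
          * (∑ i, ((q i : ℕ) : ZMod 2) * ((v i : ℕ) : ZMod 2))
        + (∑ i, ((q i : ℕ) : ZMod 2) * ((v i : ℕ) : ZMod 2))
        - (∑ i, ((q i : ℕ) : ZMod 2) * ((v i : ℕ) : ZMod 2)) * ((wt q : ZMod 2)+(wt v : ZMod 2)))) * htwo


lemma site_ne {N : ℕ} (i : Fin N) (hi : (i:ℕ) ≠ 0) (w : ℕ) (xi vi : Fin 2) :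
    ∑ b : Fin 2, ((-1:ℂ)^((b:ℕ) * (w + (vi:ℕ))) * Aop N i xi (b + vi) b)
      = if vi = xi then 1 - (-1:ℂ)^w else 0 := by
  simp only [Aop, hi, if_false]
  fin_cases xi <;> fin_cases vi <;>
    · simp [Fin.sum_univ_two, pauliZ, pauliX, pow_add, pow_mul]
      try ring

lemma site_zero {N : ℕ} (hN : 0 < N) (w : ℕ) (x0 v0 : Fin 2) :
    ∑ b : Fin 2, ((-1:ℂ)^((b:ℕ) * (w + (v0:ℕ))) * Aop N ⟨0, hN⟩ x0 (b + v0) b)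
      = (if x0 = 0 ∧ v0 = 1 then 1 - (-1:ℂ)^w else (-1:ℂ)^w - 1) * (Real.sqrt 2 : ℂ)⁻¹ := by
  simp only [Aop, if_pos rfl]
  fin_cases x0 <;> fin_cases v0 <;>
    · simp [Fin.sum_univ_two, pauliZ, pauliX, pow_add, pow_mul]
      try ring

lemma wt_update {N : ℕ} (hN : 0 < N) (x : Fin N → Fin 2) (c : Fin 2) :
    wt (Function.update x ⟨0,hN⟩ c) = (c:ℕ) + ∑ i ∈ univ.erase ⟨0,hN⟩, (x i : ℕ) := by
  unfold wt
  rw [← Finset.add_sum_erase _ _ (mem_univ (⟨0,hN⟩ : Fin N))]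
  rw [Function.update_self]
  congr 1
  exact Finset.sum_congr rfl fun i hi => by
    rw [Function.update_of_ne (Finset.mem_erase.1 hi).1]

lemma wt_split {N : ℕ} (hN : 0 < N) (x : Fin N → Fin 2) :
    wt x = (x ⟨0,hN⟩ : ℕ) + ∑ i ∈ univ.erase ⟨0,hN⟩, (x i : ℕ) :=
  (Finset.add_sum_erase _ _ (mem_univ (⟨0,hN⟩ : Fin N))).symm

lemma sum_rot {α : Type*} [Fintype α] (f : α → α → α → ℂ) :
    ∑ p, ∑ q, ∑ x, f p q x = ∑ x, ∑ q, ∑ p, f p q x := by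
  calc ∑ p, ∑ q, ∑ x, f p q x = ∑ q, ∑ p, ∑ x, f p q x := Finset.sum_comm
    _ = ∑ q, ∑ x, ∑ p, f p q x := Finset.sum_congr rfl fun q _ => Finset.sum_comm
    _ = ∑ x, ∑ q, ∑ p, f p q x := Finset.sum_comm

lemma psiG_eq (N : ℕ) (τ : Fin N → Fin 2) :
    psiG N τ = (-1:ℂ)^((wt τ).choose 2) / (Real.sqrt 2 : ℂ)^N := by
  unfold psiG; rw [Nat.choose_two_right]

lemma conj_psiG (N : ℕ) (τ : Fin N → Fin 2) :
    (starRingEnd ℂ) (psiG N τ) = psiG N τ := by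
  unfold psiG
  rw [map_div₀, map_pow, map_pow, map_neg, _root_.map_one, Complex.conj_ofReal]

/-- Maximal quantum violation by the fully connected graph state with explicit Pauli
measurements: `⟨ψ_G, Ŝ_N^+ ψ_G⟩ = 2^{N-1}√2`. -/
theorem stmt_13 (N : ℕ) (hN : 2 ≤ N) :
    ∑ p, (starRingEnd ℂ) (psiG N p) * (svetQubit N).mulVec (psiG N) p =
      ((2 ^ (N - 1) * Real.sqrt 2 : ℝ) : ℂ) := by
  have hN0 : 0 < N := by omega
  have hr2 : (Real.sqrt 2 : ℂ) * (Real.sqrt 2 : ℂ) = 2 := by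
    rw [← Complex.ofReal_mul, Real.mul_self_sqrt (by norm_num)]
    norm_num
  have hrne : (Real.sqrt 2 : ℂ) ≠ 0 := by
    intro h
    rw [h, zero_mul] at hr2
    norm_num at hr2
  -- Step 1: expand to triple sum, x outermost, p innermost
  have e1 : ∑ p, (starRingEnd ℂ) (psiG N p) * (svetQubit N).mulVec (psiG N) p
      = ∑ x : Fin N → Fin 2, ∑ q : Fin N → Fin 2, ∑ p : Fin N → Fin 2,
          sgn x * ((starRingEnd ℂ) (psiG N p) *
            (∏ i, Aop N i (x i) (p i) (q i)) * psiG N q) := by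
    simp only [Matrix.mulVec, dotProduct, svetQubit, Matrix.sum_apply,
      Matrix.smul_apply, Matrix.of_apply, smul_eq_mul, Finset.mul_sum, Finset.sum_mul]
    rw [sum_rot (fun p q x => (starRingEnd ℂ) (psiG N p) * ((sgn x * ∏ i, Aop N i (x i) (p i) (q i)) * psiG N q))]
    refine Finset.sum_congr rfl fun x _ => Finset.sum_congr rfl fun q _ =>
      Finset.sum_congr rfl fun p _ => by ring
  rw [e1]
  have e2 : ∀ x : Fin N → Fin 2,
      ∑ q : Fin N → Fin 2, ∑ p : Fin N → Fin 2,
        sgn x * ((starRingEnd ℂ) (psiG N p) *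
          (∏ i, Aop N i (x i) (p i) (q i)) * psiG N q)
      = ((Real.sqrt 2 : ℂ))⁻¹ := by
    intro x
    -- Step 1 : reindex p = q + v and rewrite the summand
    have step1 : ∀ q : Fin N → Fin 2,
        ∑ p : Fin N → Fin 2, sgn x * ((starRingEnd ℂ) (psiG N p) *
            (∏ i, Aop N i (x i) (p i) (q i)) * psiG N q)
        = ∑ v : Fin N → Fin 2, (sgn x * ((2:ℂ)^N)⁻¹ * (-1)^((wt v).choose 2)) *
            ∏ i, ((-1:ℂ)^((q i : ℕ) * (wt v + (v i : ℕ))) * Aop N i (x i) (q i + v i) (q i)) := by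
      intro q
      rw [← Equiv.sum_comp (Equiv.addLeft q)
        (fun p => sgn x * ((starRingEnd ℂ) (psiG N p) *
            (∏ i, Aop N i (x i) (p i) (q i)) * psiG N q))]
      refine Finset.sum_congr rfl fun v _ => ?_
      simp only [Equiv.coe_addLeft]
      rw [conj_psiG, psiG_eq, psiG_eq]
      have hsum : wt q * wt v + ∑ i, (q i:ℕ)*(v i:ℕ) = ∑ i, (q i:ℕ) * (wt v + (v i:ℕ)) := by
        have : wt q * wt v = ∑ i, (q i:ℕ) * wt v := by rw [← Finset.sum_mul]; rfl
        rw [this, ← Finset.sum_add_distrib]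
        exact Finset.sum_congr rfl fun i _ => by ring
      have hs : (-1:ℂ)^((wt (q+v)).choose 2) * (-1)^((wt q).choose 2)
          = (-1)^((wt v).choose 2) * ∏ i, (-1:ℂ)^((q i:ℕ) * (wt v + (v i:ℕ))) := by
        rw [sign_split, hsum, Finset.prod_pow_eq_pow_sum]
      have hprodsplit : ∏ i, ((-1:ℂ)^((q i : ℕ) * (wt v + (v i : ℕ))) * Aop N i (x i) (q i + v i) (q i))
          = (∏ i, (-1:ℂ)^((q i : ℕ) * (wt v + (v i : ℕ)))) * ∏ i, Aop N i (x i) (q i + v i) (q i) :=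
        Finset.prod_mul_distrib
      have happ : ∏ i, Aop N i (x i) ((q + v) i) (q i) = ∏ i, Aop N i (x i) (q i + v i) (q i) := rfl
      have h2N : ((2:ℂ)^N)⁻¹ = ((Real.sqrt 2 : ℂ))⁻¹^N * ((Real.sqrt 2 : ℂ))⁻¹^N := by
        rw [← mul_pow, ← mul_inv, hr2, inv_pow]
      rw [happ, hprodsplit, h2N]
      rw [div_eq_mul_inv, div_eq_mul_inv]
      calc sgn x * ((-1:ℂ) ^ (wt (q + v)).choose 2 * ((Real.sqrt 2:ℂ) ^ N)⁻¹ *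
              (∏ i, Aop N i (x i) (q i + v i) (q i)) *
              ((-1:ℂ) ^ (wt q).choose 2 * ((Real.sqrt 2:ℂ) ^ N)⁻¹))
          = sgn x * (((-1:ℂ)^((wt (q+v)).choose 2) * (-1)^((wt q).choose 2)) *
              (((Real.sqrt 2:ℂ) ^ N)⁻¹ * ((Real.sqrt 2:ℂ) ^ N)⁻¹) *
              ∏ i, Aop N i (x i) (q i + v i) (q i)) := by ring
        _ = _ := by rw [hs]; rw [inv_pow]; ring
    have step2 : ∑ q : Fin N → Fin 2, ∑ v : Fin N → Fin 2,
          (sgn x * ((2:ℂ)^N)⁻¹ * (-1)^((wt v).choose 2)) *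
            ∏ i, ((-1:ℂ)^((q i : ℕ) * (wt v + (v i : ℕ))) * Aop N i (x i) (q i + v i) (q i))
        = ∑ v : Fin N → Fin 2, (sgn x * ((2:ℂ)^N)⁻¹ * (-1)^((wt v).choose 2)) *
            ∏ i, ∑ b : Fin 2, ((-1:ℂ)^((b : ℕ) * (wt v + (v i : ℕ))) * Aop N i (x i) (b + v i) b) := by
      rw [Finset.sum_comm]
      refine Finset.sum_congr rfl fun v _ => ?_
      rw [← Finset.mul_sum]
      congr 1
      rw [Finset.prod_univ_sum, Fintype.piFinset_univ]
    have step34 : ∀ v : Fin N → Fin 2,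
        ∏ i, ∑ b : Fin 2, ((-1:ℂ)^((b : ℕ) * (wt v + (v i : ℕ))) * Aop N i (x i) (b + v i) b)
        = ((if x ⟨0,hN0⟩ = 0 ∧ v ⟨0,hN0⟩ = 1 then 1 - (-1:ℂ)^(wt v) else (-1:ℂ)^(wt v) - 1)
            * (Real.sqrt 2 : ℂ)⁻¹)
          * (if ∀ i ∈ univ.erase (⟨0,hN0⟩ : Fin N), v i = x i
              then (1 - (-1:ℂ)^(wt v))^(N-1) else 0) := by
      intro v
      rw [← Finset.mul_prod_erase univ _ (mem_univ (⟨0,hN0⟩ : Fin N))]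
      congr 1
      · exact site_zero hN0 (wt v) (x _) (v _)
      · rw [Finset.prod_congr rfl (fun i hi =>
          site_ne i (by simpa [Fin.ext_iff] using (Finset.mem_erase.1 hi).1) (wt v) (x i) (v i))]
        by_cases h : ∀ i ∈ univ.erase (⟨0,hN0⟩ : Fin N), v i = x i
        · rw [if_pos h, Finset.prod_congr rfl (fun i hi => if_pos (h i hi)), Finset.prod_const,
            Finset.card_erase_of_mem (mem_univ _), Finset.card_univ, Fintype.card_fin]
        · push_neg at h
          obtain ⟨i, hi, hne⟩ := h
          rw [if_neg (by push_neg; exact ⟨i, hi, hne⟩)]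
          exact Finset.prod_eq_zero hi (if_neg hne)
    have step5 : ∀ G : (Fin N → Fin 2) → ℂ,
        ∑ v, (if ∀ i ∈ univ.erase (⟨0,hN0⟩ : Fin N), v i = x i then G v else 0)
        = G (Function.update x ⟨0,hN0⟩ 0) + G (Function.update x ⟨0,hN0⟩ 1) := by
      intro G
      have hcondu : ∀ c : Fin 2, ∀ i ∈ univ.erase (⟨0,hN0⟩ : Fin N),
          Function.update x ⟨0,hN0⟩ c i = x i := fun c i hi =>
        Function.update_of_ne (Finset.mem_erase.1 hi).1 _ _
      have hne01 : Function.update x ⟨0,hN0⟩ 0 ≠ Function.update x ⟨0,hN0⟩ 1 := by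
        intro h
        have := congrFun h ⟨0,hN0⟩
        simp [Function.update_self] at this
      rw [← Finset.sum_subset
        (Finset.subset_univ {Function.update x ⟨0,hN0⟩ 0, Function.update x ⟨0,hN0⟩ 1})]
      · rw [Finset.sum_pair hne01, if_pos (hcondu 0), if_pos (hcondu 1)]
      · intro v _ hv
        rw [if_neg]
        intro h
        apply hv
        have hv0 : v = Function.update x ⟨0,hN0⟩ (v ⟨0,hN0⟩) := by
          funext i
          by_cases hii : i = ⟨0,hN0⟩
          · subst hii; rw [Function.update_self]
          · rw [Function.update_of_ne hii]
            exact h i (Finset.mem_erase.2 ⟨hii, mem_univ i⟩)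
        rcases (by decide : ∀ a : Fin 2, a = 0 ∨ a = 1) (v ⟨0,hN0⟩) with h0 | h0
        · rw [h0] at hv0
          simp [hv0]
        · rw [h0] at hv0
          simp [hv0]
    calc ∑ q : Fin N → Fin 2, ∑ p : Fin N → Fin 2,
          sgn x * ((starRingEnd ℂ) (psiG N p) * (∏ i, Aop N i (x i) (p i) (q i)) * psiG N q)
        = ∑ q : Fin N → Fin 2, ∑ v : Fin N → Fin 2,
            (sgn x * ((2:ℂ)^N)⁻¹ * (-1)^((wt v).choose 2)) *
            ∏ i, ((-1:ℂ)^((q i : ℕ) * (wt v + (v i : ℕ))) * Aop N i (x i) (q i + v i) (q i)) :=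
          Finset.sum_congr rfl fun q _ => step1 q
      _ = ∑ v : Fin N → Fin 2, (sgn x * ((2:ℂ)^N)⁻¹ * (-1)^((wt v).choose 2)) *
            ∏ i, ∑ b : Fin 2, ((-1:ℂ)^((b : ℕ) * (wt v + (v i : ℕ))) * Aop N i (x i) (b + v i) b) :=
          step2
      _ = ∑ v : Fin N → Fin 2, (if ∀ i ∈ univ.erase (⟨0,hN0⟩ : Fin N), v i = x i then
            (sgn x * ((2:ℂ)^N)⁻¹ * (-1)^((wt v).choose 2)) *
            (((if x ⟨0,hN0⟩ = 0 ∧ v ⟨0,hN0⟩ = 1 then 1 - (-1:ℂ)^(wt v) else (-1:ℂ)^(wt v) - 1)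
              * (Real.sqrt 2 : ℂ)⁻¹) * (1 - (-1:ℂ)^(wt v))^(N-1)) else 0) := by
          refine Finset.sum_congr rfl fun v _ => ?_
          rw [step34 v]
          by_cases h : ∀ i ∈ univ.erase (⟨0,hN0⟩ : Fin N), v i = x i
          · rw [if_pos h, if_pos h]
          · simp only [if_neg h, mul_zero]
      _ = _ := by
          rw [step5 (fun v => (sgn x * ((2:ℂ)^N)⁻¹ * (-1)^((wt v).choose 2)) *
            (((if x ⟨0,hN0⟩ = 0 ∧ v ⟨0,hN0⟩ = 1 then 1 - (-1:ℂ)^(wt v) else (-1:ℂ)^(wt v) - 1)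
              * (Real.sqrt 2 : ℂ)⁻¹) * (1 - (-1:ℂ)^(wt v))^(N-1)))]
          simp only [Function.update_self]
          rw [wt_update hN0 x 0, wt_update hN0 x 1]
          set K := ∑ i ∈ univ.erase (⟨0,hN0⟩:Fin N), (x i : ℕ) with hKdef
          simp only [Fin.val_zero, Fin.val_one, Nat.zero_add]
          have hsgn : sgn x = (-1:ℂ)^(((x ⟨0,hN0⟩ : ℕ) + K + 1).choose 2) := by
            unfold sgn
            rw [wt_split hN0 x, ← hKdef, Nat.choose_two_right, Nat.add_sub_cancel, Nat.mul_comm]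
          have hm2 : ∀ a : ℕ, (-1:ℂ)^a * (-1:ℂ)^a = 1 := fun a => by
            rw [← pow_add]; exact Even.neg_one_pow ⟨a, rfl⟩
          have h2ne : ((2:ℂ))^N ≠ 0 := pow_ne_zero _ two_ne_zero
          have hpow2 : (2:ℂ) * 2^(N-1) = 2^N := by
            rw [← pow_succ']; congr 1; omega
          have hzp : ((0:ℂ))^(N-1) = 0 := zero_pow (by omega)
          have hp1 : (K+1).choose 2 = K + K.choose 2 := by
            rw [Nat.choose_succ_succ K 1, Nat.choose_one_right]
          have hp2 : (K+2).choose 2 = (K+1) + (K+1).choose 2 := by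
            rw [Nat.choose_succ_succ (K+1) 1, Nat.choose_one_right]
          rw [hsgn]
          rcases (by decide : ∀ a : Fin 2, a = 0 ∨ a = 1) (x ⟨0,hN0⟩) with hx | hx <;>
            rw [hx] <;> simp only [Fin.val_zero, Fin.val_one, Nat.zero_add]
          · -- x0 = 0
            rw [if_neg (by decide), if_pos (by decide)]
            rcases Nat.even_or_odd K with ⟨m,hm⟩ | ⟨m,hm⟩
            · have hEK : (-1:ℂ)^K = 1 := Even.neg_one_pow ⟨m, hm⟩
              have hOK : (-1:ℂ)^(1+K) = -1 := Odd.neg_one_pow ⟨m, by omega⟩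
              rw [hEK, hOK, sub_self, hzp, Nat.add_comm 1 K]
              norm_num
              field_simp
              rw [sq, hm2, one_mul, hpow2]
            · have hOK0 : (-1:ℂ)^K = -1 := Odd.neg_one_pow ⟨m, hm⟩
              have hEK1 : (-1:ℂ)^(1+K) = 1 := Even.neg_one_pow ⟨m+1, by omega⟩
              rw [hOK0, hEK1, sub_self, hzp, hp1, pow_add, hOK0]
              norm_num
              field_simp
              rw [sq, hm2, one_mul, hpow2]
          · -- x0 = 1
            rw [if_neg (by decide), if_neg (by decide)]
            rw [show 1 + K + 1 = K + 2 from by omega, hp2, pow_add]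
            rcases Nat.even_or_odd K with ⟨m,hm⟩ | ⟨m,hm⟩
            · have hEK : (-1:ℂ)^K = 1 := Even.neg_one_pow ⟨m, hm⟩
              have hOK : (-1:ℂ)^(1+K) = -1 := Odd.neg_one_pow ⟨m, by omega⟩
              have hOK1 : (-1:ℂ)^(K+1) = -1 := Odd.neg_one_pow ⟨m, by omega⟩
              rw [hEK, hOK, hOK1, sub_self, hzp, Nat.add_comm 1 K]
              norm_num
              field_simp
              rw [sq, hm2, one_mul, hpow2]
            · have hOK0 : (-1:ℂ)^K = -1 := Odd.neg_one_pow ⟨m, hm⟩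
              have hEK1 : (-1:ℂ)^(1+K) = 1 := Even.neg_one_pow ⟨m+1, by omega⟩
              have hEK1' : (-1:ℂ)^(K+1) = 1 := Even.neg_one_pow ⟨m+1, by omega⟩
              rw [hOK0, hEK1, hEK1', sub_self, hzp, hp1, pow_add, hOK0]
              norm_num
              field_simp
              rw [sq, hm2, one_mul, hpow2]
  -- final summation
  rw [Finset.sum_congr rfl fun x _ => e2 x, Finset.sum_const, Finset.card_univ,
    Fintype.card_fun, Fintype.card_fin, Fintype.card_fin, nsmul_eq_mul]
  push_cast
  rw [show (2:ℂ)^N = 2^(N-1) * 2 from by rw [← pow_succ]; congr 1; omega, ← hr2]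
  field_simp
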